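/- Let p ≥ 3 be a prime and S̄(p) ⊆ F_p the set of elements that eventually reach 0 under iteration of x ↦ x^2 - 1. Then S̄(p) = {-1, 0, 1} if and only if 2 is not a quadratic residue modulo p, equivalently p ≡ ±3 (mod 8). -/
import Mathlib


/-- `S̄(p)`: elements of `F_p` that eventually reach `0` under iteration of `x ↦ x^2 - 1`. -/
def Sbar (p : ℕ) : Set (ZMod p) := {a : ZMod p | ∃ k : ℕ, (fun x : ZMod p => x ^ 2 - 1)^[k] a = 0}

theorem Sbar_eq_iff (p : ℕ) (hp : p.Prime) (h3 : 3 ≤ p) :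
    (Sbar p = {-1, 0, 1} ↔ ¬ IsSquare (2 : ZMod p)) ∧
      (¬ IsSquare (2 : ZMod p) ↔ (p % 8 = 3 ∨ p % 8 = 5)) := by
  haveI : Fact p.Prime := ⟨hp⟩
  have h20 : (2 : ZMod p) ≠ 0 := by
    intro h
    have : ((2 : ℕ) : ZMod p) = 0 := by exact_mod_cast h
    rw [ZMod.natCast_eq_zero_iff] at this
    have := Nat.le_of_dvd (by norm_num) this
    omega
  have h10 : (1 : ZMod p) ≠ 0 := one_ne_zero
  constructor
  · constructor
    · intro hS hsq
      obtain ⟨r, hr⟩ := hsq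
      have h2 : r ^ 2 = 2 := by rw [hr]; ring
      have hrS : r ∈ Sbar p := by
        refine ⟨2, ?_⟩
        simp only [Function.iterate_succ, Function.iterate_zero, Function.comp_apply, id_eq]
        rw [h2]; norm_num
      rw [hS] at hrS
      simp only [Set.mem_insert_iff, Set.mem_singleton_iff] at hrS
      rcases hrS with h | h | h <;> rw [h] at h2
      · exact h10 (by linear_combination -h2)
      · exact h20 (by linear_combination -h2)
      · exact h10 (by linear_combination -h2)
    · intro hnsq
      ext a
      simp only [Set.mem_insert_iff, Set.mem_singleton_iff]
      constructor
      · rintro ⟨k, hk⟩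
        induction k generalizing a with
        | zero => right; left; exact hk
        | succ n ih =>
          rw [Function.iterate_succ_apply] at hk
          rcases ih _ hk with h | h | h
          · have ha : a ^ 2 = 0 := by linear_combination h
            right; left; exact pow_eq_zero_iff (by norm_num) |>.mp ha
          · have ha : (a - 1) * (a + 1) = 0 := by linear_combination h
            rcases mul_eq_zero.mp ha with h' | h'
            · right; right; linear_combination h'
            · left; linear_combination h'
          · exfalso; exact hnsq ⟨a, by linear_combination -h⟩
      · rintro (h | h | h) <;> subst h
        · exact ⟨1, by norm_num⟩
        · exact ⟨0, rfl⟩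
        · exact ⟨1, by norm_num⟩
  · rw [ZMod.exists_sq_eq_two_iff (by omega : p ≠ 2)]
    have hodd : p % 2 = 1 := Nat.odd_iff.mp (hp.odd_of_ne_two (by omega))
    omega
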